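/- For all ℓ ∈ [0, π] and α ∈ [ℓ, 2ℓ], one has (1 − cos(ℓ/2))·cos(ℓ − α/2) + 2·cos(ℓ/2)·cos(α/2) ≥ 0. -/
import Mathlib


theorem trig_ineq_10 (ℓ α : ℝ) (hℓ0 : 0 ≤ ℓ) (hℓπ : ℓ ≤ Real.pi)
    (hα1 : ℓ ≤ α) (hα2 : α ≤ 2 * ℓ) :
    0 ≤ (1 - Real.cos (ℓ / 2)) * Real.cos (ℓ - α / 2)
      + 2 * Real.cos (ℓ / 2) * Real.cos (α / 2) := by
  set c := Real.cos (ℓ / 2) with hc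
  set s := Real.sin (ℓ / 2) with hs
  set t := (α - ℓ) / 2 with ht
  have hl2 : ℓ / 2 ≤ Real.pi / 2 := by linarith
  have hl2' : 0 ≤ ℓ / 2 := by linarith
  have ht0 : 0 ≤ t := by simp [ht]; linarith
  have ht1 : t ≤ ℓ / 2 := by simp [ht]; linarith
  have htpi2 : t ≤ Real.pi / 2 := le_trans ht1 hl2
  have hcnn : 0 ≤ c := Real.cos_nonneg_of_mem_Icc ⟨by linarith, hl2⟩
  have hsnn : 0 ≤ s := Real.sin_nonneg_of_nonneg_of_le_pi hl2' (by linarith [Real.pi_pos])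
  have hcostnn : 0 ≤ Real.cos t := Real.cos_nonneg_of_mem_Icc ⟨by linarith, htpi2⟩
  have hsintnn : 0 ≤ Real.sin t := Real.sin_nonneg_of_nonneg_of_le_pi ht0
    (by linarith [Real.pi_pos])
  have hcost : c ≤ Real.cos t := Real.cos_le_cos_of_nonneg_of_le_pi ht0
    (by linarith [Real.pi_pos]) ht1
  have hsint : Real.sin t ≤ s := by
    have := Real.strictMonoOn_sin.monotoneOn (a := t) (b := ℓ / 2)
      ⟨by linarith [Real.pi_pos], htpi2⟩ ⟨by linarith [Real.pi_pos], hl2⟩ ht1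
    exact this
  have hpyth : s ^ 2 + c ^ 2 = 1 := Real.sin_sq_add_cos_sq _
  have e1 : ℓ - α / 2 = ℓ / 2 - t := by rw [ht]; ring
  have e2 : α / 2 = ℓ / 2 + t := by rw [ht]; ring
  rw [e1, e2, Real.cos_sub, Real.cos_add]
  rcases le_or_gt c (1/3) with h | h
  · have h1 : 0 ≤ c * (1 + c) * Real.cos t := by positivity
    have h2 : 0 ≤ s * (1 - 3 * c) * Real.sin t := by
      apply mul_nonneg (mul_nonneg hsnn (by linarith)) hsintnn
    nlinarith [h1, h2]
  · nlinarith [mul_le_mul_of_nonneg_left hcost (mul_nonneg hcnn (by linarith : (0:ℝ) ≤ 1 + c)),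
      mul_le_mul_of_nonneg_left hsint (mul_nonneg hsnn (by linarith : (0:ℝ) ≤ 3 * c - 1)),
      sq_nonneg (2 * c - 1), sq_nonneg s]
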